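/- Let ξ : [τ₁,τ₂] → ℝ be C¹ with ξ' = g where g is continuous, g > 0, ξ(τ₂) − ξ(τ₁) = 2π, and suppose there is a constant K ≥ 1 with g(t₁)/g(t₂) ≤ K for all t₁,t₂ ∈ [τ₁,τ₂] and |g(t₁) − g(t₂)| ≤ K for all t₁,t₂ ∈ [τ₁,τ₂]. Then |∫_{τ₁}^{τ₂} sin²(ξ(τ)) dτ − (τ₂−τ₁)/2| ≤ C/g(τ₁)² where C depends only on K. -/

import Mathlib

/-- Averaging lemma for fast oscillations: if `ξ' = g > 0` advances by `2π`
over `[τ₁,τ₂]` and `g` has ratio and difference variation bounded by `K`,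
then `∫ sin²(ξ) = (τ₂-τ₁)/2 + O(1/g(τ₁)²)` with constant depending only on `K`. -/
theorem stmt_15 (K : ℝ) (hK : 1 ≤ K) :
    ∃ C : ℝ, ∀ (τ₁ τ₂ : ℝ) (g ξ : ℝ → ℝ), τ₁ ≤ τ₂ →
      ContinuousOn g (Set.Icc τ₁ τ₂) →
      (∀ t ∈ Set.Icc τ₁ τ₂, 0 < g t) →
      (∀ t ∈ Set.Icc τ₁ τ₂, HasDerivAt ξ (g t) t) →
      ξ τ₂ - ξ τ₁ = 2 * Real.pi →
      (∀ t₁ ∈ Set.Icc τ₁ τ₂, ∀ t₂ ∈ Set.Icc τ₁ τ₂,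
        g t₁ / g t₂ ≤ K ∧ |g t₁ - g t₂| ≤ K) →
      |(∫ τ in τ₁..τ₂, Real.sin (ξ τ) ^ 2) - (τ₂ - τ₁)/2| ≤ C / (g τ₁)^2 := by
  refine ⟨Real.pi * K ^ 2, fun τ₁ τ₂ g ξ hle hgc hgpos hderiv hadv hvar => ?_⟩
  have hK0 : (0:ℝ) < K := lt_of_lt_of_le one_pos hK
  have hmem1 : τ₁ ∈ Set.Icc τ₁ τ₂ := ⟨le_refl _, hle⟩
  have hg1 : 0 < g τ₁ := hgpos τ₁ hmem1
  have huIcc : Set.uIcc τ₁ τ₂ = Set.Icc τ₁ τ₂ := Set.uIcc_of_le hle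
  have hξc : ContinuousOn ξ (Set.Icc τ₁ τ₂) := fun t ht =>
    (hderiv t ht).continuousAt.continuousWithinAt
  have hcosc : ContinuousOn (fun τ => Real.cos (2 * ξ τ)) (Set.Icc τ₁ τ₂) :=
    Real.continuous_cos.comp_continuousOn (continuousOn_const.mul hξc)
  have hgc' : ContinuousOn g (Set.uIcc τ₁ τ₂) := huIcc ▸ hgc
  have hgint : IntervalIntegrable g MeasureTheory.volume τ₁ τ₂ :=
    hgc'.intervalIntegrable
  have hcosint : IntervalIntegrable (fun τ => Real.cos (2 * ξ τ))
      MeasureTheory.volume τ₁ τ₂ := (huIcc ▸ hcosc :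
      ContinuousOn _ (Set.uIcc τ₁ τ₂)).intervalIntegrable
  have hcgint : IntervalIntegrable (fun τ => Real.cos (2 * ξ τ) * g τ / g τ₁)
      MeasureTheory.volume τ₁ τ₂ := by
    apply ContinuousOn.intervalIntegrable
    exact ((huIcc ▸ hcosc : ContinuousOn _ (Set.uIcc τ₁ τ₂)).mul hgc').div_const _
  -- ∫ g = 2π
  have hintg : (∫ τ in τ₁..τ₂, g τ) = 2 * Real.pi := by
    rw [intervalIntegral.integral_eq_sub_of_hasDerivAt
      (fun t ht => hderiv t (huIcc ▸ ht)) hgint, hadv]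
  -- ∫ cos(2ξ) g / g τ₁ = 0
  have hFderiv : ∀ t ∈ Set.uIcc τ₁ τ₂,
      HasDerivAt (fun τ => Real.sin (2 * ξ τ) / (2 * g τ₁))
        (Real.cos (2 * ξ t) * g t / g τ₁) t := by
    intro t ht
    have h1 : HasDerivAt (fun τ => 2 * ξ τ) (2 * g t) t :=
      (hderiv t (huIcc ▸ ht)).const_mul 2
    have h2 : HasDerivAt (fun τ => Real.sin (2 * ξ τ))
        (Real.cos (2 * ξ t) * (2 * g t)) t := h1.sin
    have h3 := h2.div_const (2 * g τ₁)
    exact h3.congr_deriv (by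
      rw [div_eq_div_iff (mul_ne_zero two_ne_zero (ne_of_gt hg1)) (ne_of_gt hg1)]
      ring)
  have hzero : (∫ τ in τ₁..τ₂, Real.cos (2 * ξ τ) * g τ / g τ₁) = 0 := by
    rw [intervalIntegral.integral_eq_sub_of_hasDerivAt hFderiv hcgint]
    have hξ2 : ξ τ₂ = ξ τ₁ + 2 * Real.pi := by linarith
    rw [hξ2]
    have : 2 * (ξ τ₁ + 2 * Real.pi) = ξ τ₁ * 2 + 2 * Real.pi + 2 * Real.pi := by ring
    rw [this, Real.sin_add_two_pi, Real.sin_add_two_pi]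
    ring_nf
  -- the error integral
  have hsplit : (∫ τ in τ₁..τ₂, Real.cos (2 * ξ τ)) =
      ∫ τ in τ₁..τ₂, Real.cos (2 * ξ τ) * (1 - g τ / g τ₁) := by
    rw [show (fun τ => Real.cos (2 * ξ τ) * (1 - g τ / g τ₁)) =
        fun τ => Real.cos (2 * ξ τ) - Real.cos (2 * ξ τ) * g τ / g τ₁ by
      funext τ; ring]
    rw [intervalIntegral.integral_sub hcosint hcgint, hzero, sub_zero]
  -- pointwise bound
  have hbound : ∀ t ∈ Set.uIoc τ₁ τ₂,
      ‖Real.cos (2 * ξ t) * (1 - g t / g τ₁)‖ ≤ K / g τ₁ := by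
    intro t ht
    have ht' : t ∈ Set.Icc τ₁ τ₂ := by
      have := Set.uIoc_of_le hle ▸ ht
      exact ⟨le_of_lt this.1, this.2⟩
    have hd : |g τ₁ - g t| ≤ K := (hvar τ₁ hmem1 t ht').2
    have h1 : |1 - g t / g τ₁| = |g τ₁ - g t| / g τ₁ := by
      rw [← abs_of_pos hg1, ← abs_div, abs_of_pos hg1]
      congr 1
      field_simp
    calc ‖Real.cos (2 * ξ t) * (1 - g t / g τ₁)‖
        = |Real.cos (2 * ξ t)| * |1 - g t / g τ₁| := abs_mul _ _
      _ ≤ 1 * |1 - g t / g τ₁| := by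
          gcongr; exact Real.abs_cos_le_one _
      _ = |g τ₁ - g t| / g τ₁ := by rw [one_mul, h1]
      _ ≤ K / g τ₁ := by gcongr
  have hJ : |∫ τ in τ₁..τ₂, Real.cos (2 * ξ τ)| ≤ (K / g τ₁) * (τ₂ - τ₁) := by
    rw [hsplit]
    have := intervalIntegral.norm_integral_le_of_norm_le_const hbound
    rwa [abs_of_nonneg (by linarith : (0:ℝ) ≤ τ₂ - τ₁)] at this
  -- length bound: τ₂ - τ₁ ≤ 2πK / g τ₁
  have hlen : τ₂ - τ₁ ≤ 2 * Real.pi * K / g τ₁ := by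
    have hlow : ∀ t ∈ Set.Icc τ₁ τ₂, g τ₁ / K ≤ g t := by
      intro t ht
      have := (hvar τ₁ hmem1 t ht).1
      rw [div_le_iff₀ (hgpos t ht)] at this
      rw [div_le_iff₀ hK0]
      linarith [this]
    have hmono : (∫ _ in τ₁..τ₂, g τ₁ / K) ≤ ∫ τ in τ₁..τ₂, g τ :=
      intervalIntegral.integral_mono_on hle intervalIntegrable_const hgint hlow
    rw [intervalIntegral.integral_const, hintg, smul_eq_mul] at hmono
    have h2 := mul_le_mul_of_nonneg_right hmono (le_of_lt hK0)
    rw [le_div_iff₀ hg1]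
    have hKne : K ≠ 0 := ne_of_gt hK0
    field_simp at h2
    linarith
  -- express sin² integral
  have hsin : (∫ τ in τ₁..τ₂, Real.sin (ξ τ) ^ 2) =
      (τ₂ - τ₁) / 2 - (∫ τ in τ₁..τ₂, Real.cos (2 * ξ τ)) / 2 := by
    have : (fun τ => Real.sin (ξ τ) ^ 2) =
        fun τ => 1 / 2 - Real.cos (2 * ξ τ) / 2 := by
      funext τ; rw [Real.sin_sq_eq_half_sub]
    rw [this, intervalIntegral.integral_sub intervalIntegrable_const
        (hcosint.div_const 2), intervalIntegral.integral_const,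
      intervalIntegral.integral_div, smul_eq_mul]
    ring
  rw [hsin]
  have h1 : |(τ₂ - τ₁) / 2 - (∫ τ in τ₁..τ₂, Real.cos (2 * ξ τ)) / 2 - (τ₂ - τ₁) / 2|
      = |∫ τ in τ₁..τ₂, Real.cos (2 * ξ τ)| / 2 := by
    rw [show (τ₂ - τ₁) / 2 - (∫ τ in τ₁..τ₂, Real.cos (2 * ξ τ)) / 2 - (τ₂ - τ₁) / 2
        = -((∫ τ in τ₁..τ₂, Real.cos (2 * ξ τ)) / 2) by ring, abs_neg, abs_div]
    simp
  rw [h1]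
  have h2 : |∫ τ in τ₁..τ₂, Real.cos (2 * ξ τ)| / 2 ≤
      (K / g τ₁) * (2 * Real.pi * K / g τ₁) / 2 := by
    gcongr
    calc |∫ τ in τ₁..τ₂, Real.cos (2 * ξ τ)| ≤ (K / g τ₁) * (τ₂ - τ₁) := hJ
      _ ≤ (K / g τ₁) * (2 * Real.pi * K / g τ₁) := by
          have hge : 0 ≤ K / g τ₁ := div_nonneg (le_of_lt hK0) (le_of_lt hg1)
          exact mul_le_mul_of_nonneg_left hlen hge
  refine le_trans h2 (le_of_eq ?_)
  field_simp
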